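/- If Γ ⊢ A in classical natural deduction Nc, then the sequent Γ ⊃ [A] is derivable in the sequent calculus G. -/

import Mathlib

inductive PropF (V : Type) : Type
  | Var : V → PropF V
  | Bot : PropF V
  | Conj : PropF V → PropF V → PropF V
  | Disj : PropF V → PropF V → PropF V
  | Impl : PropF V → PropF V → PropF V
deriving DecidableEq

variable {V : Type} [DecidableEq V]

def PropF.Neg (A : PropF V) : PropF V := A.Impl .Bot
def PropF.Top : PropF V := PropF.Neg .Bot

def TrueQ (v : V → Bool) : PropF V → Bool
  | .Var p => v p
  | .Bot => false
  | .Conj B C => TrueQ v B && TrueQ v C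
  | .Disj B C => TrueQ v B || TrueQ v C
  | .Impl B C => !(TrueQ v B) || TrueQ v C

def Satisfies (v : V → Bool) (Γ : List (PropF V)) : Prop := ∀ A ∈ Γ, TrueQ v A = true
def Models (Γ : List (PropF V)) (A : PropF V) : Prop := ∀ v, Satisfies v Γ → TrueQ v A = true
def Valid (A : PropF V) : Prop := Models [] A
def Validates (v : V → Bool) (Δ : List (PropF V)) : Prop := ∃ A ∈ Δ, TrueQ v A = true

inductive Nc : List (PropF V) → PropF V → Prop
  | Nax (Γ : List (PropF V)) (A : PropF V) : A ∈ Γ → Nc Γ A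
  | ImpI (Γ : List (PropF V)) (A B : PropF V) : Nc (A :: Γ) B → Nc Γ (A.Impl B)
  | ImpE (Γ : List (PropF V)) (A B : PropF V) : Nc Γ (A.Impl B) → Nc Γ A → Nc Γ B
  | BotC (Γ : List (PropF V)) (A : PropF V) : Nc (A.Neg :: Γ) .Bot → Nc Γ A
  | AndI (Γ : List (PropF V)) (A B : PropF V) : Nc Γ A → Nc Γ B → Nc Γ (A.Conj B)
  | AndE1 (Γ : List (PropF V)) (A B : PropF V) : Nc Γ (A.Conj B) → Nc Γ A
  | AndE2 (Γ : List (PropF V)) (A B : PropF V) : Nc Γ (A.Conj B) → Nc Γ B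
  | OrI1 (Γ : List (PropF V)) (A B : PropF V) : Nc Γ A → Nc Γ (A.Disj B)
  | OrI2 (Γ : List (PropF V)) (A B : PropF V) : Nc Γ B → Nc Γ (A.Disj B)
  | OrE (Γ : List (PropF V)) (A B C : PropF V) : Nc Γ (A.Disj B) → Nc (A :: Γ) C → Nc (B :: Γ) C → Nc Γ C

def Provable (A : PropF V) : Prop := Nc [] A

inductive NNF (V : Type) : Type
  | NPos : V → NNF V
  | NNeg : V → NNF V
  | NBot : NNF V
  | NTop : NNF V
  | NConj : NNF V → NNF V → NNF V
  | NDisj : NNF V → NNF V → NNF V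
deriving DecidableEq

def NNFtoPropF : NNF V → PropF V
  | .NPos p => .Var p
  | .NNeg p => (PropF.Var p).Neg
  | .NBot => .Bot
  | .NTop => PropF.Top
  | .NConj B C => (NNFtoPropF B).Conj (NNFtoPropF C)
  | .NDisj B C => (NNFtoPropF B).Disj (NNFtoPropF C)

mutual
def MakeNNF : PropF V → NNF V
  | .Var p => .NPos p
  | .Bot => .NBot
  | .Disj B C => .NDisj (MakeNNF B) (MakeNNF C)
  | .Conj B C => .NConj (MakeNNF B) (MakeNNF C)
  | .Impl B C => .NDisj (MakeNNFN B) (MakeNNF C)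
def MakeNNFN : PropF V → NNF V
  | .Var p => .NNeg p
  | .Bot => .NTop
  | .Disj B C => .NConj (MakeNNFN B) (MakeNNFN C)
  | .Conj B C => .NDisj (MakeNNFN B) (MakeNNFN C)
  | .Impl B C => .NConj (MakeNNF B) (MakeNNFN C)
end

inductive Lit (V : Type) : Type
  | LPos : V → Lit V
  | LNeg : V → Lit V
  | LBot : Lit V
  | LTop : Lit V
deriving DecidableEq

def LiteraltoPropF : Lit V → PropF V
  | .LPos p => .Var p
  | .LNeg p => (PropF.Var p).Neg
  | .LBot => .Bot
  | .LTop => PropF.Top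

abbrev Clause (V : Type) : Type := List (Lit V)
abbrev CNF (V : Type) : Type := List (Clause V)

abbrev ClausetoPropF (l : Clause V) : PropF V :=
  l.foldr (fun a r => (LiteraltoPropF a).Disj r) .Bot

def CNFtoPropF (ll : CNF V) : PropF V :=
  ll.foldr (fun c r => (ClausetoPropF c).Conj r) PropF.Top

def AddClause (l : Clause V) (ll : CNF V) : CNF V := ll.map (fun l2 => l ++ l2)
def Disjunct (ll ll2 : CNF V) : CNF V := ll.flatMap (fun l => AddClause l ll2)

def MakeCNF : NNF V → CNF V
  | .NPos p => [[.LPos p]]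
  | .NNeg p => [[.LNeg p]]
  | .NBot => [[.LBot]]
  | .NTop => [[.LTop]]
  | .NConj B C => MakeCNF B ++ MakeCNF C
  | .NDisj B C => Disjunct (MakeCNF B) (MakeCNF C)

def Valid_Clause (l : Clause V) : Prop :=
  Lit.LTop ∈ l ∨ ∃ p, Lit.LPos p ∈ l ∧ Lit.LNeg p ∈ l
def Valid_CNF (ll : CNF V) : Prop := ∀ l ∈ ll, Valid_Clause l

inductive AxiomH : PropF V → Prop
  | HOrI1 (A B : PropF V) : AxiomH (A.Impl (A.Disj B))
  | HOrI2 (A B : PropF V) : AxiomH (B.Impl (A.Disj B))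
  | HAndI (A B : PropF V) : AxiomH (A.Impl (B.Impl (A.Conj B)))
  | HOrE (A B C : PropF V) : AxiomH ((A.Disj B).Impl ((A.Impl C).Impl ((B.Impl C).Impl C)))
  | HAndE1 (A B : PropF V) : AxiomH ((A.Conj B).Impl A)
  | HAndE2 (A B : PropF V) : AxiomH ((A.Conj B).Impl B)
  | HS (A B C : PropF V) : AxiomH ((A.Impl (B.Impl C)).Impl ((A.Impl B).Impl (A.Impl C)))
  | HK (A B : PropF V) : AxiomH (A.Impl (B.Impl A))
  | HClas (A : PropF V) : AxiomH ((A.Neg.Neg).Impl A)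

inductive Hc : List (PropF V) → PropF V → Prop
  | Hass (A : PropF V) (Γ : List (PropF V)) : A ∈ Γ → Hc Γ A
  | Hax (A : PropF V) (Γ : List (PropF V)) : AxiomH A → Hc Γ A
  | HImpE (Γ : List (PropF V)) (A B : PropF V) : Hc Γ (A.Impl B) → Hc Γ A → Hc Γ B

inductive G : List (PropF V) → List (PropF V) → Prop
  | Gax (A : PropF V) (Γ Δ : List (PropF V)) : A ∈ Γ → A ∈ Δ → G Γ Δ
  | GBot (Γ Δ : List (PropF V)) : PropF.Bot ∈ Γ → G Γ Δ
  | AndL (A B : PropF V) (Γ1 Γ2 Δ : List (PropF V)) : G (Γ1 ++ A :: B :: Γ2) Δ → G (Γ1 ++ (A.Conj B) :: Γ2) Δ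
  | AndR (A B : PropF V) (Γ Δ1 Δ2 : List (PropF V)) : G Γ (Δ1 ++ A :: Δ2) → G Γ (Δ1 ++ B :: Δ2) → G Γ (Δ1 ++ (A.Conj B) :: Δ2)
  | OrL (A B : PropF V) (Γ1 Γ2 Δ : List (PropF V)) : G (Γ1 ++ A :: Γ2) Δ → G (Γ1 ++ B :: Γ2) Δ → G (Γ1 ++ (A.Disj B) :: Γ2) Δ
  | OrR (A B : PropF V) (Γ Δ1 Δ2 : List (PropF V)) : G Γ (Δ1 ++ A :: B :: Δ2) → G Γ (Δ1 ++ (A.Disj B) :: Δ2)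
  | ImpL (A B : PropF V) (Γ1 Γ2 Δ : List (PropF V)) : G (Γ1 ++ B :: Γ2) Δ → G (Γ1 ++ Γ2) (A :: Δ) → G (Γ1 ++ (A.Impl B) :: Γ2) Δ
  | ImpR (A B : PropF V) (Γ Δ1 Δ2 : List (PropF V)) : G (A :: Γ) (Δ1 ++ B :: Δ2) → G Γ (Δ1 ++ (A.Impl B) :: Δ2)
  | Cut (A : PropF V) (Γ Δ : List (PropF V)) : G Γ (A :: Δ) → G (A :: Γ) Δ → G Γ Δ

inductive Gcf : List (PropF V) → List (PropF V) → Prop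
  | Gax (p : V) (Γ Δ : List (PropF V)) : PropF.Var p ∈ Γ → PropF.Var p ∈ Δ → Gcf Γ Δ
  | GBot (Γ Δ : List (PropF V)) : PropF.Bot ∈ Γ → Gcf Γ Δ
  | AndL (A B : PropF V) (Γ1 Γ2 Δ : List (PropF V)) : Gcf (Γ1 ++ A :: B :: Γ2) Δ → Gcf (Γ1 ++ (A.Conj B) :: Γ2) Δ
  | AndR (A B : PropF V) (Γ Δ1 Δ2 : List (PropF V)) : Gcf Γ (Δ1 ++ A :: Δ2) → Gcf Γ (Δ1 ++ B :: Δ2) → Gcf Γ (Δ1 ++ (A.Conj B) :: Δ2)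
  | OrL (A B : PropF V) (Γ1 Γ2 Δ : List (PropF V)) : Gcf (Γ1 ++ A :: Γ2) Δ → Gcf (Γ1 ++ B :: Γ2) Δ → Gcf (Γ1 ++ (A.Disj B) :: Γ2) Δ
  | OrR (A B : PropF V) (Γ Δ1 Δ2 : List (PropF V)) : Gcf Γ (Δ1 ++ A :: B :: Δ2) → Gcf Γ (Δ1 ++ (A.Disj B) :: Δ2)
  | ImpL (A B : PropF V) (Γ1 Γ2 Δ : List (PropF V)) : Gcf (Γ1 ++ B :: Γ2) Δ → Gcf (Γ1 ++ Γ2) (A :: Δ) → Gcf (Γ1 ++ (A.Impl B) :: Γ2) Δ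
  | ImpR (A B : PropF V) (Γ Δ1 Δ2 : List (PropF V)) : Gcf (A :: Γ) (Δ1 ++ B :: Δ2) → Gcf Γ (Δ1 ++ (A.Impl B) :: Δ2)

def BigOr (Δ : List (PropF V)) : PropF V := Δ.foldr PropF.Disj .Bot

def size : PropF V → Nat
  | .Var _ => 0
  | .Bot => 0
  | .Conj B C => (size B + size C).succ
  | .Disj B C => (size B + size C).succ
  | .Impl B C => (size B + size C).succ

def sizel (Γ : List (PropF V)) : Nat := (Γ.map size).sum
def sizes (Γ Δ : List (PropF V)) : Nat := sizel Γ + sizel Δ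

section AuxG
set_option linter.unusedSectionVars false
variable {V : Type} [DecidableEq V]

private lemma perm_mid2 (A B : PropF V) (Γ1 Γ2 : List (PropF V)) :
    (Γ1 ++ A :: B :: Γ2).Perm (A :: B :: (Γ1 ++ Γ2)) :=
  List.Perm.trans List.perm_middle (List.Perm.cons A List.perm_middle)

private lemma G.permG {Γ Δ Γ' Δ' : List (PropF V)} (h : G Γ Δ)
    (hΓ : Γ.Perm Γ') (hΔ : Δ.Perm Δ') : G Γ' Δ' := by
  induction h generalizing Γ' Δ' with
  | Gax A Γ Δ h1 h2 => exact G.Gax A _ _ (hΓ.mem_iff.mp h1) (hΔ.mem_iff.mp h2)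
  | GBot Γ Δ h1 => exact G.GBot _ _ (hΓ.mem_iff.mp h1)
  | AndL A B Γ1 Γ2 Δ h ih =>
      have hmem := hΓ.mem_iff.mp (List.mem_append_right Γ1 List.mem_cons_self)
      obtain ⟨Γ1', Γ2', rfl⟩ := List.append_of_mem hmem
      have hc : (Γ1 ++ Γ2).Perm (Γ1' ++ Γ2') :=
        (List.perm_middle.symm.trans (hΓ.trans List.perm_middle)).cons_inv
      exact G.AndL A B Γ1' Γ2' _ (ih ((perm_mid2 A B Γ1 Γ2).trans
        ((hc.cons B).cons A |>.trans (perm_mid2 A B Γ1' Γ2').symm)) hΔ)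
  | AndR A B Γ Δ1 Δ2 h1 h2 ih1 ih2 =>
      have hmem := hΔ.mem_iff.mp (List.mem_append_right Δ1 List.mem_cons_self)
      obtain ⟨Δ1', Δ2', rfl⟩ := List.append_of_mem hmem
      have hc : (Δ1 ++ Δ2).Perm (Δ1' ++ Δ2') :=
        (List.perm_middle.symm.trans (hΔ.trans List.perm_middle)).cons_inv
      exact G.AndR A B _ Δ1' Δ2'
        (ih1 hΓ (List.perm_middle.trans ((hc.cons A).trans List.perm_middle.symm)))
        (ih2 hΓ (List.perm_middle.trans ((hc.cons B).trans List.perm_middle.symm)))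
  | OrL A B Γ1 Γ2 Δ h1 h2 ih1 ih2 =>
      have hmem := hΓ.mem_iff.mp (List.mem_append_right Γ1 List.mem_cons_self)
      obtain ⟨Γ1', Γ2', rfl⟩ := List.append_of_mem hmem
      have hc : (Γ1 ++ Γ2).Perm (Γ1' ++ Γ2') :=
        (List.perm_middle.symm.trans (hΓ.trans List.perm_middle)).cons_inv
      exact G.OrL A B Γ1' Γ2' _
        (ih1 (List.perm_middle.trans ((hc.cons A).trans List.perm_middle.symm)) hΔ)
        (ih2 (List.perm_middle.trans ((hc.cons B).trans List.perm_middle.symm)) hΔ)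
  | OrR A B Γ Δ1 Δ2 h ih =>
      have hmem := hΔ.mem_iff.mp (List.mem_append_right Δ1 List.mem_cons_self)
      obtain ⟨Δ1', Δ2', rfl⟩ := List.append_of_mem hmem
      have hc : (Δ1 ++ Δ2).Perm (Δ1' ++ Δ2') :=
        (List.perm_middle.symm.trans (hΔ.trans List.perm_middle)).cons_inv
      exact G.OrR A B _ Δ1' Δ2' (ih hΓ ((perm_mid2 A B Δ1 Δ2).trans
        ((hc.cons B).cons A |>.trans (perm_mid2 A B Δ1' Δ2').symm)))
  | ImpL A B Γ1 Γ2 Δ h1 h2 ih1 ih2 =>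
      have hmem := hΓ.mem_iff.mp (List.mem_append_right Γ1 List.mem_cons_self)
      obtain ⟨Γ1', Γ2', rfl⟩ := List.append_of_mem hmem
      have hc : (Γ1 ++ Γ2).Perm (Γ1' ++ Γ2') :=
        (List.perm_middle.symm.trans (hΓ.trans List.perm_middle)).cons_inv
      exact G.ImpL A B Γ1' Γ2' _
        (ih1 (List.perm_middle.trans ((hc.cons B).trans List.perm_middle.symm)) hΔ)
        (ih2 hc (hΔ.cons A))
  | ImpR A B Γ Δ1 Δ2 h ih =>
      have hmem := hΔ.mem_iff.mp (List.mem_append_right Δ1 List.mem_cons_self)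
      obtain ⟨Δ1', Δ2', rfl⟩ := List.append_of_mem hmem
      have hc : (Δ1 ++ Δ2).Perm (Δ1' ++ Δ2') :=
        (List.perm_middle.symm.trans (hΔ.trans List.perm_middle)).cons_inv
      exact G.ImpR A B _ Δ1' Δ2' (ih (hΓ.cons A)
        (List.perm_middle.trans ((hc.cons B).trans List.perm_middle.symm)))
  | Cut A Γ Δ h1 h2 ih1 ih2 =>
      exact G.Cut A _ _ (ih1 hΓ (hΔ.cons A)) (ih2 (hΓ.cons A) hΔ)

private lemma G.weakL1 {Γ Δ : List (PropF V)} (X : PropF V) (h : G Γ Δ) :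
    G (X :: Γ) Δ := by
  induction h with
  | Gax A Γ Δ h1 h2 => exact G.Gax A _ _ (List.mem_cons_of_mem _ h1) h2
  | GBot Γ Δ h1 => exact G.GBot _ _ (List.mem_cons_of_mem _ h1)
  | AndL A B Γ1 Γ2 Δ h ih => exact G.AndL A B (X :: Γ1) Γ2 Δ ih
  | AndR A B Γ Δ1 Δ2 h1 h2 ih1 ih2 => exact G.AndR A B _ Δ1 Δ2 ih1 ih2
  | OrL A B Γ1 Γ2 Δ h1 h2 ih1 ih2 => exact G.OrL A B (X :: Γ1) Γ2 Δ ih1 ih2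
  | OrR A B Γ Δ1 Δ2 h ih => exact G.OrR A B _ Δ1 Δ2 ih
  | ImpL A B Γ1 Γ2 Δ h1 h2 ih1 ih2 => exact G.ImpL A B (X :: Γ1) Γ2 Δ ih1 ih2
  | ImpR A B Γ Δ1 Δ2 h ih =>
      exact G.ImpR A B _ Δ1 Δ2 (ih.permG (List.Perm.swap _ _ _) (List.Perm.refl _))
  | Cut A Γ Δ h1 h2 ih1 ih2 =>
      exact G.Cut A _ _ ih1 (ih2.permG (List.Perm.swap _ _ _) (List.Perm.refl _))

private lemma G.weakR1 {Γ Δ : List (PropF V)} (X : PropF V) (h : G Γ Δ) :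
    G Γ (X :: Δ) := by
  induction h with
  | Gax A Γ Δ h1 h2 => exact G.Gax A _ _ h1 (List.mem_cons_of_mem _ h2)
  | GBot Γ Δ h1 => exact G.GBot _ _ h1
  | AndL A B Γ1 Γ2 Δ h ih => exact G.AndL A B Γ1 Γ2 _ ih
  | AndR A B Γ Δ1 Δ2 h1 h2 ih1 ih2 => exact G.AndR A B Γ (X :: Δ1) Δ2 ih1 ih2
  | OrL A B Γ1 Γ2 Δ h1 h2 ih1 ih2 => exact G.OrL A B Γ1 Γ2 _ ih1 ih2
  | OrR A B Γ Δ1 Δ2 h ih => exact G.OrR A B Γ (X :: Δ1) Δ2 ih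
  | ImpL A B Γ1 Γ2 Δ h1 h2 ih1 ih2 =>
      exact G.ImpL A B Γ1 Γ2 _ ih1 (ih2.permG (List.Perm.refl _) (List.Perm.swap _ _ _))
  | ImpR A B Γ Δ1 Δ2 h ih => exact G.ImpR A B Γ (X :: Δ1) Δ2 ih
  | Cut A Γ Δ h1 h2 ih1 ih2 =>
      exact G.Cut A _ _ (ih1.permG (List.Perm.refl _) (List.Perm.swap _ _ _)) ih2

private lemma G.weakLs {Γ Δ : List (PropF V)} (L : List (PropF V)) (h : G Γ Δ) :
    G (L ++ Γ) Δ := by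
  induction L with
  | nil => exact h
  | cons x L ih => exact ih.weakL1 x

private lemma G.weakRs {Γ Δ : List (PropF V)} (L : List (PropF V)) (h : G Γ Δ) :
    G Γ (L ++ Δ) := by
  induction L with
  | nil => exact h
  | cons x L ih => exact ih.weakR1 x

private lemma G.contrL {Γ' Δ : List (PropF V)} :
    ∀ Γ : List (PropF V), G (Γ' ++ Γ) Δ → Γ ⊆ Γ' → G Γ' Δ := by
  intro Γ
  induction Γ generalizing Γ' Δ with
  | nil => intro h _; simpa using h
  | cons x Γr ih =>
      intro h hs
      have h1 : G (x :: (Γ' ++ Γr)) Δ :=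
        h.permG (List.perm_middle) (List.Perm.refl _)
      have h2 : G (Γ' ++ Γr) (x :: Δ) :=
        G.Gax x _ _ (List.mem_append_left _ (hs (by simp))) (by simp)
      exact ih (G.Cut x _ _ h2 h1) (fun a ha => hs (List.mem_cons_of_mem _ ha))

private lemma G.contrR {Γ Δ' : List (PropF V)} :
    ∀ Δ : List (PropF V), G Γ (Δ' ++ Δ) → Δ ⊆ Δ' → G Γ Δ' := by
  intro Δ
  induction Δ generalizing Γ Δ' with
  | nil => intro h _; simpa using h
  | cons x Δr ih =>
      intro h hs
      have h1 : G Γ (x :: (Δ' ++ Δr)) :=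
        h.permG (List.Perm.refl _) (List.perm_middle)
      have h2 : G (x :: Γ) (Δ' ++ Δr) :=
        G.Gax x _ _ (by simp) (List.mem_append_left _ (hs (by simp)))
      exact ih (G.Cut x _ _ h1 h2) (fun a ha => hs (List.mem_cons_of_mem _ ha))

private lemma G.mono {Γ Δ Γ' Δ' : List (PropF V)} (h : G Γ Δ)
    (hΓ : Γ ⊆ Γ') (hΔ : Δ ⊆ Δ') : G Γ' Δ' :=
  G.contrR Δ (G.contrL Γ ((h.weakLs Γ').weakRs Δ') hΓ) hΔ

end AuxG

theorem stmt15 {V : Type} [DecidableEq V] (Γ : List (PropF V)) (A : PropF V)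
    (h : Nc Γ A) : G Γ [A] := by
  induction h with
  | Nax Γ A hA => exact G.Gax A _ _ hA (by simp)
  | ImpI Γ A B h ih => exact G.ImpR A B Γ [] [] ih
  | ImpE Γ A B h1 h2 ih1 ih2 =>
      refine G.Cut (A.Impl B) _ _ (ih1.mono (fun a ha => ha) (by simp)) ?_
      refine G.ImpL A B [] Γ [B] ?_ ?_
      · exact G.Gax B _ _ (by simp) (by simp)
      · exact ih2.mono (fun a ha => ha) (by simp)
  | BotC Γ A h ih =>
      refine G.Cut A.Neg _ _ ?_ ?_
      · refine G.ImpR A PropF.Bot Γ [] [A] ?_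
        exact G.Gax A _ _ (by simp) (by simp)
      · refine G.Cut PropF.Bot _ _ (ih.mono (fun a ha => ha) (by simp)) ?_
        exact G.GBot _ _ (by simp)
  | AndI Γ A B h1 h2 ih1 ih2 => exact G.AndR A B Γ [] [] ih1 ih2
  | AndE1 Γ A B h ih =>
      refine G.Cut (A.Conj B) _ _ (ih.mono (fun a ha => ha) (by simp)) ?_
      exact G.AndL A B [] Γ [A] (G.Gax A _ _ (by simp) (by simp))
  | AndE2 Γ A B h ih =>
      refine G.Cut (A.Conj B) _ _ (ih.mono (fun a ha => ha) (by simp)) ?_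
      exact G.AndL A B [] Γ [B] (G.Gax B _ _ (by simp) (by simp))
  | OrI1 Γ A B h ih =>
      exact G.OrR A B Γ [] [] (ih.mono (fun a ha => ha) (by simp))
  | OrI2 Γ A B h ih =>
      exact G.OrR A B Γ [] [] (ih.mono (fun a ha => ha) (by simp))
  | OrE Γ A B C h h1 h2 ih ih1 ih2 =>
      refine G.Cut (A.Disj B) _ _ (ih.mono (fun a ha => ha) (by simp)) ?_
      exact G.OrL A B [] Γ [C] ih1 ih2
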